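/- Let S ⊆ ℝ^d be compact, P a probability measure on S, f : S → ℝ and c : S×S → [0,∞) continuous with c(x,x) = 0 for all x ∈ S, and ρ > 0. Then the unregularized WDRO value satisfies strong duality: sup{ E_{π₂} f : π ∈ Π_P, E_π c ≤ ρ } = inf_{λ ≥ 0} λρ + E_{x∼P}[ sup_{y∈S} ( f(y) − λ c(x,y) ) ], and both the primal supremum and the dual infimum are attained. -/

import Mathlib

set_option linter.unusedSectionVars false
set_option linter.unusedVariables false

open MeasureTheory Filter Set Topology

noncomputable section
namespace WDROsel

variable {X Y : Type*} [TopologicalSpace X] [TopologicalSpace Y]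

/-- Iterated constrained-argmin sets: the head of the list is applied last. -/
def chainSet (S : Set Y) : List (X → Y → ℝ) → X → Set Y
  | [] => fun _ => S
  | u :: L => fun x => {y ∈ chainSet S L x | u x y ≤ sInf (u x '' chainSet S L x)}

/-- Value of stage `u` after constraints `L`. -/
def chainVal (S : Set Y) (u : X → Y → ℝ) (L : List (X → Y → ℝ)) (x : X) : ℝ :=
  sInf (u x '' chainSet S L x)

def chainVals (S : Set Y) : (L : List (X → Y → ℝ)) → X → Fin L.length → ℝ
  | [] => fun _ => Fin.elim0
  | u :: L => fun x => Fin.cons (chainVal S u L x) (chainVals S L x)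

def penAux : (L : List (X → Y → ℝ)) → (Fin L.length → ℝ) × X × Y → ℝ
  | [] => fun _ => 0
  | u :: L => fun q => max (u q.2.1 q.2.2 - q.1 (0 : Fin (L.length + 1))) 0
      + penAux L (Fin.tail (q.1 : Fin (L.length + 1) → ℝ), q.2)

theorem chainSet_subset (S : Set Y) : ∀ (L : List (X → Y → ℝ)) (x : X), chainSet S L x ⊆ S
  | [], _ => subset_rfl
  | u :: L, x => fun y hy => chainSet_subset S L x hy.1

theorem chainSet_append_subset (S : Set Y) (M L : List (X → Y → ℝ)) (x : X) :
    chainSet S (M ++ L) x ⊆ chainSet S L x := by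
  induction M with
  | nil => exact subset_rfl
  | cons u M ih => exact fun y hy => ih hy.1

theorem cont_app {u : X → Y → ℝ} (hu : Continuous ↿u) (x : X) : Continuous (u x) :=
  hu.comp (Continuous.prodMk_right x)

theorem chainSet_isCompact_nonempty {S : Set Y} (hS : IsCompact S) (hne : S.Nonempty) :
    ∀ (L : List (X → Y → ℝ)), (∀ u ∈ L, Continuous ↿u) → ∀ (x : X),
      IsCompact (chainSet S L x) ∧ (chainSet S L x).Nonempty := by
  intro L hL
  induction L with
  | nil => exact fun x => ⟨hS, hne⟩
  | cons u L ih =>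
      intro x
      have hu : Continuous ↿u := hL u (List.mem_cons_self)
      have hL' : ∀ v ∈ L, Continuous ↿v := fun v hv => hL v (List.mem_cons_of_mem _ hv)
      obtain ⟨hK, hNe⟩ := ih hL' x
      have hcx : Continuous (u x) := cont_app hu x
      have himg : IsCompact (u x '' chainSet S L x) := hK.image hcx
      have hmem : sInf (u x '' chainSet S L x) ∈ u x '' chainSet S L x :=
        himg.sInf_mem (hNe.image _)
      obtain ⟨y₀, hy₀, hval⟩ := hmem
      have heq : chainSet S (u :: L) x
          = chainSet S L x ∩ {y | u x y ≤ sInf (u x '' chainSet S L x)} := rfl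
      constructor
      · rw [heq]
        exact hK.inter_right ((isClosed_Iic.preimage hcx))
      · exact ⟨y₀, hy₀, le_of_eq hval⟩

theorem chainVal_le {S : Set Y} {L : List (X → Y → ℝ)} {x : X}
    (hK : IsCompact (chainSet S L x)) {u : X → Y → ℝ} (hu : Continuous (u x))
    {y : Y} (hy : y ∈ chainSet S L x) : chainVal S u L x ≤ u x y :=
  csInf_le (hK.image hu).bddBelow ⟨y, hy, rfl⟩

theorem penAux_nonneg : ∀ (L : List (X → Y → ℝ)) (q), 0 ≤ penAux L q
  | [], _ => le_refl 0
  | u :: L, q => add_nonneg (le_max_right _ _) (penAux_nonneg L _)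

theorem penAux_continuous : ∀ (L : List (X → Y → ℝ)), (∀ u ∈ L, Continuous ↿u) →
    Continuous (penAux L) := by
  intro L
  induction L with
  | nil => intro _; exact continuous_const
  | cons u L ih =>
      intro hL
      have hu : Continuous ↿u := hL u (List.mem_cons_self)
      have hL' : ∀ v ∈ L, Continuous ↿v := fun v hv => hL v (List.mem_cons_of_mem _ hv)
      have h1 : Continuous fun q : (Fin (L.length + 1) → ℝ) × X × Y => u q.2.1 q.2.2 :=
        hu.comp continuous_snd
      have h2 : Continuous fun q : (Fin (L.length + 1) → ℝ) × X × Y => q.1 0 :=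
        (continuous_apply (0 : Fin (L.length + 1))).comp continuous_fst
      have h3 : Continuous fun q : (Fin (L.length + 1) → ℝ) × X × Y => (Fin.tail q.1, q.2) :=
        Continuous.prodMk
          (continuous_pi fun i => (continuous_apply i.succ).comp continuous_fst)
          continuous_snd
      show Continuous fun q : (Fin (L.length + 1) → ℝ) × X × Y =>
        max (u q.2.1 q.2.2 - q.1 (0 : Fin (L.length + 1))) 0
          + penAux L (Fin.tail (q.1 : Fin (L.length + 1) → ℝ), q.2)
      refine Continuous.add (Continuous.max (h1.sub h2) continuous_const) ?_
      exact (ih hL').comp h3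

theorem penAux_zero_iff {S : Set Y} (hS : IsCompact S) (hne : S.Nonempty) :
    ∀ (L : List (X → Y → ℝ)), (∀ u ∈ L, Continuous ↿u) → ∀ (x : X) {y : Y}, y ∈ S →
      (penAux L (chainVals S L x, x, y) = 0 ↔ y ∈ chainSet S L x) := by
  intro L
  induction L with
  | nil => intro _ x y hy; simpa [penAux, chainSet] using hy
  | cons u L ih =>
      intro hL x y hy
      have hu : Continuous ↿u := hL u (List.mem_cons_self)
      have hL' : ∀ v ∈ L, Continuous ↿v := fun v hv => hL v (List.mem_cons_of_mem _ hv)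
      have hpen : penAux (u :: L) (chainVals S (u :: L) x, x, y)
          = max (u x y - chainVal S u L x) 0 + penAux L (chainVals S L x, x, y) := by
        simp [penAux, chainVals, Fin.tail_cons]
      rw [hpen]
      rw [add_eq_zero_iff_of_nonneg (le_max_right _ _) (penAux_nonneg L _)]
      have h1 : max (u x y - chainVal S u L x) 0 = 0 ↔ u x y ≤ chainVal S u L x := by
        rw [max_eq_right_iff]
        exact sub_nonpos
      rw [h1, ih hL' x hy]
      exact ⟨fun h => ⟨h.2, h.1⟩, fun h => ⟨h.2, h.1⟩⟩


variable {X Y : Type*} [TopologicalSpace X] [TopologicalSpace Y]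

section Meas
variable [FirstCountableTopology Y] [MeasurableSpace X] [OpensMeasurableSpace X]

theorem measurable_chain {S : Set Y} (hS : IsCompact S) (hne : S.Nonempty) :
    ∀ (L : List (X → Y → ℝ)), (∀ u ∈ L, Continuous ↿u) →
      Measurable (chainVals S L) ∧
        (∀ u : X → Y → ℝ, Continuous ↿u → Measurable (chainVal S u L)) := by
  have key : ∀ (L : List (X → Y → ℝ)), (∀ u ∈ L, Continuous ↿u) →
      Measurable (chainVals S L) →
      ∀ u : X → Y → ℝ, Continuous ↿u → Measurable (chainVal S u L) := by
    intro L hL hmv u hu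
    have hpenc : Continuous (penAux (X := X) (Y := Y) L) := penAux_continuous L hL
    set n := L.length with hn
    set W : ℕ → X → ℝ := fun N x =>
      sInf ((fun y => u x y + N * penAux L (chainVals S L x, x, y)) '' S) with hWdef
    have hWmeas : ∀ N : ℕ, Measurable (W N) := by
      intro N
      have hG : Continuous (fun q : ((Fin n → ℝ) × X) × Y =>
          u q.1.2 q.2 + N * penAux L (q.1.1, q.1.2, q.2)) := by
        have c1 : Continuous fun q : ((Fin n → ℝ) × X) × Y => u q.1.2 q.2 :=
          hu.comp ((continuous_snd.comp continuous_fst).prodMk continuous_snd)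
        have c2 : Continuous fun q : ((Fin n → ℝ) × X) × Y =>
            penAux L (q.1.1, q.1.2, q.2) :=
          hpenc.comp ((continuous_fst.comp continuous_fst).prodMk
            ((continuous_snd.comp continuous_fst).prodMk continuous_snd))
        exact c1.add (continuous_const.mul c2)
      have contW : Continuous (fun p : (Fin n → ℝ) × X =>
          sInf ((fun y => u p.2 y + N * penAux L (p.1, p.2, y)) '' S)) :=
        hS.continuous_sInf hG
      have : W N = (fun p : (Fin n → ℝ) × X =>
          sInf ((fun y => u p.2 y + N * penAux L (p.1, p.2, y)) '' S))
          ∘ (fun x => (chainVals S L x, x)) := rfl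
      rw [this]
      exact contW.measurable.comp (hmv.prodMk measurable_id)
    have htendW : ∀ x : X, Tendsto (fun N => W N x) atTop (𝓝 (chainVal S u L x)) := by
      intro x
      obtain ⟨hK, hA⟩ := chainSet_isCompact_nonempty hS hne L hL x
      have hsub := chainSet_subset S L x
      set p : Y → ℝ := fun y => penAux L (chainVals S L x, x, y) with hp
      have hpc : Continuous p :=
        hpenc.comp (continuous_const.prodMk (continuous_const.prodMk continuous_id))
      have hp0 : ∀ y, 0 ≤ p y := fun y => penAux_nonneg L _
      have hpiff : ∀ {y : Y}, y ∈ S → (p y = 0 ↔ y ∈ chainSet S L x) :=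
        fun hy => penAux_zero_iff hS hne L hL x hy
      have hux : Continuous (u x) := cont_app hu x
      set val := chainVal S u L x with hval
      obtain ⟨B, hB⟩ := hS.exists_bound_of_continuousOn hux.continuousOn
      have hfn : ∀ N : ℕ, Continuous fun y => u x y + N * p y :=
        fun N => hux.add (continuous_const.mul hpc)
      have hWle : ∀ N : ℕ, W N x ≤ val := by
        intro N
        obtain ⟨y₀, hy₀A, hy₀val⟩ := (hK.image hux).sInf_mem (hA.image (u x))
        have hyS : y₀ ∈ S := hsub hy₀A
        have hle : W N x ≤ u x y₀ + N * p y₀ :=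
          csInf_le ((hS.image (hfn N)).bddBelow) ⟨y₀, hyS, rfl⟩
        have hpz : p y₀ = 0 := (hpiff hyS).mpr hy₀A
        rw [hpz] at hle
        have : u x y₀ = val := hy₀val
        simpa [this] using hle
      have hWmem : ∀ N : ℕ, ∃ y ∈ S, u x y + N * p y = W N x := by
        intro N
        obtain ⟨y, hy, hveq⟩ := (hS.image (hfn N)).sInf_mem (hne.image _)
        exact ⟨y, hy, hveq⟩
      have hlow : ∀ ε : ℝ, 0 < ε → ∀ᶠ N : ℕ in atTop, val - ε < W N x := by
        intro ε hε
        by_contra hcon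
        rw [Filter.not_eventually] at hcon
        have hcon' : ∃ᶠ N in atTop, W N x ≤ val - ε := hcon.mono (fun N h => not_lt.mp h)
        obtain ⟨φ, hφmono, hφ⟩ := Filter.extraction_of_frequently_atTop hcon'
        choose ys hysS hysEq using hWmem
        have hCb : ∀ k, (φ k : ℝ) * p (ys (φ k)) ≤ val - ε + B := by
          intro k
          have h1 : u x (ys (φ k)) + φ k * p (ys (φ k)) = W (φ k) x := hysEq (φ k)
          have h2 : -B ≤ u x (ys (φ k)) := by
            have := hB _ (hysS (φ k))
            rw [Real.norm_eq_abs, abs_le] at this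
            exact this.1
          have h3 := hφ k
          linarith
        have hC0 : 0 ≤ val - ε + B := by
          have h0 := hCb 0
          have : (0:ℝ) ≤ (φ 0 : ℝ) * p (ys (φ 0)) :=
            mul_nonneg (Nat.cast_nonneg _) (hp0 _)
          linarith
        obtain ⟨yLim, hyLimS, ψ, hψmono, htend0⟩ :=
          hS.tendsto_subseq (x := fun k => ys (φ k)) (fun k => hysS (φ k))
        have htend : Tendsto (fun j => ys (φ (ψ j))) atTop (𝓝 yLim) := htend0
        have hφψ : ∀ j : ℕ, (j : ℝ) ≤ ((φ (ψ j) : ℕ) : ℝ) := by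
          intro j
          exact_mod_cast le_trans (hψmono.le_apply) (hφmono.le_apply)
        have htendp : Tendsto (fun j => p (ys (φ (ψ j)))) atTop (𝓝 (p yLim)) :=
          (hpc.tendsto yLim).comp htend
        have hzeros : Tendsto (fun j => p (ys (φ (ψ j)))) atTop (𝓝 0) := by
          apply squeeze_zero' (Filter.Eventually.of_forall (fun j => hp0 _))
            (g := fun j => (val - ε + B) / ((φ (ψ j) : ℕ) : ℝ))
          · filter_upwards [eventually_ge_atTop 1] with j hj
            have hpos : (0:ℝ) < ((φ (ψ j) : ℕ) : ℝ) := by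
              have := hφψ j
              have : (1:ℝ) ≤ ((φ (ψ j) : ℕ) : ℝ) := le_trans (by exact_mod_cast hj) this
              linarith
            rw [le_div_iff₀ hpos]
            have := hCb (ψ j)
            linarith [this]
          · apply Tendsto.div_atTop tendsto_const_nhds
            exact tendsto_natCast_atTop_atTop.comp ((hφmono.comp hψmono).tendsto_atTop)
        have hpz : p yLim = 0 := tendsto_nhds_unique htendp hzeros
        have hyLimA : yLim ∈ chainSet S L x := (hpiff hyLimS).mp hpz
        have hvley : val ≤ u x yLim := chainVal_le hK hux hyLimA
        have hule : ∀ j, u x (ys (φ (ψ j))) ≤ val - ε := by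
          intro j
          have h1 := hysEq (φ (ψ j))
          have h2 := hφ (ψ j)
          have h3 : (0:ℝ) ≤ (φ (ψ j) : ℝ) * p (ys (φ (ψ j))) :=
            mul_nonneg (Nat.cast_nonneg _) (hp0 _)
          linarith
        have hlim : u x yLim ≤ val - ε :=
          le_of_tendsto (((hux.tendsto yLim).comp htend)) (Filter.Eventually.of_forall hule)
        linarith
      refine Metric.tendsto_atTop.mpr ?_
      intro ε hε
      obtain ⟨N₀, hN₀⟩ := (hlow (ε/2) (by positivity)).exists_forall_of_atTop
      refine ⟨N₀, fun N hN => ?_⟩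
      have h1 := hN₀ N hN
      have h2 := hWle N
      rw [Real.dist_eq, abs_lt]
      constructor <;> linarith
    exact measurable_of_tendsto_metrizable hWmeas (tendsto_pi_nhds.mpr htendW)
  intro L
  induction L with
  | nil =>
      intro _
      have h0 : Measurable (chainVals (X := X) S ([] : List (X → Y → ℝ))) := by
        have : chainVals (X := X) S ([] : List (X → Y → ℝ)) = fun _ => Fin.elim0 := rfl
        rw [this]; exact measurable_const
      exact ⟨h0, fun u hu => key [] (by simp) h0 u hu⟩
  | cons u L ih =>
      intro hL
      have hu := hL u (List.mem_cons_self)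
      have hL' : ∀ v ∈ L, Continuous ↿v := fun v hv => hL v (List.mem_cons_of_mem _ hv)
      obtain ⟨ihv, ihval⟩ := ih hL'
      have hmv : Measurable (chainVals S (u :: L)) := by
        have he : chainVals S (u :: L)
            = fun x => Fin.cons (chainVal S u L x) (chainVals S L x) := rfl
        rw [he, measurable_pi_iff]
        intro i
        refine Fin.cases ?_ ?_ i
        · simpa using ihval u hu
        · intro j; simpa using (measurable_pi_iff.mp ihv) j
      exact ⟨hmv, fun u' hu' => key (u :: L) hL hmv u' hu'⟩

end Meas



theorem chainSet_nil (S : Set Y) (x : X) : chainSet (X := X) S [] x = S := rfl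

theorem chainSet_cons (S : Set Y) (u : X → Y → ℝ) (L : List (X → Y → ℝ)) (x : X) :
    chainSet S (u :: L) x
      = {y ∈ chainSet S L x | u x y ≤ sInf (u x '' chainSet S L x)} := rfl

theorem mem_chainSet_cons {S : Set Y} {u : X → Y → ℝ} {L : List (X → Y → ℝ)} {x : X} {y : Y} :
    y ∈ chainSet S (u :: L) x ↔ y ∈ chainSet S L x ∧ u x y ≤ chainVal S u L x := Iff.rfl

theorem exists_selection {X : Type*} [TopologicalSpace X] [MeasurableSpace X]
    [OpensMeasurableSpace X] {d : ℕ} {S : Set (EuclideanSpace ℝ (Fin d))}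
    (hS : IsCompact S) (hne : S.Nonempty)
    (u₀ u₁ : X → EuclideanSpace ℝ (Fin d) → ℝ)
    (h₀ : Continuous ↿u₀) (h₁ : Continuous ↿u₁) :
    ∃ T : X → EuclideanSpace ℝ (Fin d), Measurable T ∧ (∀ x, T x ∈ S) ∧
      (∀ x, ∀ y ∈ S, u₀ x (T x) ≤ u₀ x y) ∧
      (∀ x, ∀ y ∈ S, u₀ x y ≤ u₀ x (T x) → u₁ x (T x) ≤ u₁ x y) := by
  classical
  set coord : Fin d → X → EuclideanSpace ℝ (Fin d) → ℝ := fun i _ y => y i with hcoord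
  set cl : List (X → EuclideanSpace ℝ (Fin d) → ℝ) := List.ofFn coord with hcl
  set base : List (X → EuclideanSpace ℝ (Fin d) → ℝ) := [u₁, u₀] with hbase
  set Lfull : List (X → EuclideanSpace ℝ (Fin d) → ℝ) := cl.reverse ++ base with hLfull
  have hcoordc : ∀ i, Continuous ↿(coord i) := fun i => (continuous_apply i).comp ((PiLp.continuous_ofLp 2 _).comp continuous_snd)
  have hbasec : ∀ u ∈ base, Continuous ↿u := by
    intro u hu
    rcases List.mem_pair.mp hu with rfl | rfl
    exacts [h₁, h₀]
  have hLfullc : ∀ u ∈ Lfull, Continuous ↿u := by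
    intro u hu
    rcases List.mem_append.mp hu with h | h
    · obtain ⟨i, rfl⟩ := (List.mem_ofFn).mp (List.mem_reverse.mp h)
      exact hcoordc i
    · exact hbasec u h
  set Li : ℕ → List (X → EuclideanSpace ℝ (Fin d) → ℝ) :=
    fun k => (cl.take k).reverse ++ base with hLi
  have hLic : ∀ k, ∀ u ∈ Li k, Continuous ↿u := by
    intro k u hu
    rcases List.mem_append.mp hu with h | h
    · exact hLfullc u (List.mem_append.mpr (Or.inl
        (List.mem_reverse.mpr (List.take_subset _ _ (List.mem_reverse.mp h)))))
    · exact hbasec u h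
  set T : X → EuclideanSpace ℝ (Fin d) :=
    fun x => WithLp.toLp 2 (fun i => chainVal S (coord i) (Li i) x) with hT
  have pin : ∀ (x : X) (i : Fin d), ∀ y ∈ chainSet S Lfull x,
      y i = chainVal S (coord i) (Li i) x := by
    intro x i y hy
    have h1 : cl.take (i + 1) = cl.take i ++ [coord i] := by
      rw [← List.take_concat_get' cl i (by simp [hcl])]
      congr 1
      simp [hcl]
    have hdec : Lfull = (cl.drop (i + 1)).reverse ++ ((coord i) :: Li i) := by
      have h2 : Lfull = (cl.drop (i+1)).reverse ++ ((cl.take (i+1)).reverse ++ base) := by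
        rw [← List.append_assoc, ← List.reverse_append, List.take_append_drop]
      rw [h2, h1]
      simp [hLi, List.reverse_append]
    have hy2 : y ∈ chainSet S ((coord i) :: Li i) x := by
      rw [hdec] at hy
      exact chainSet_append_subset S _ _ x hy
    rw [mem_chainSet_cons] at hy2
    have hK := (chainSet_isCompact_nonempty hS hne (Li i) (hLic i) x).1
    have hge : chainVal S (coord i) (Li i) x ≤ y i :=
      chainVal_le hK (cont_app (hcoordc i) x) hy2.1
    exact le_antisymm hy2.2 hge
  have hTmem : ∀ x, T x ∈ chainSet S Lfull x := by
    intro x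
    obtain ⟨y, hy⟩ := (chainSet_isCompact_nonempty hS hne Lfull hLfullc x).2
    have : y = T x := PiLp.ext (fun i => pin x i y hy)
    exact this ▸ hy
  have hTbase : ∀ x, T x ∈ chainSet S base x :=
    fun x => chainSet_append_subset S cl.reverse base x (hTmem x)
  refine ⟨T, ?_, ?_, ?_, ?_⟩
  · exact (WithLp.measurable_toLp 2 _).comp (measurable_pi_lambda _
      (fun i => (measurable_chain hS hne (Li i) (hLic i)).2 (coord i) (hcoordc i)))
  · intro x; exact chainSet_subset S Lfull x (hTmem x)
  · intro x y hy
    have hTx0 : T x ∈ chainSet S [u₀] x := ((hTbase x).1 : _)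
    have hle : u₀ x (T x) ≤ sInf (u₀ x '' S) := hTx0.2
    exact hle.trans (csInf_le (hS.image (cont_app h₀ x)).bddBelow ⟨y, hy, rfl⟩)
  · intro x y hy hyle
    have h1 := hTbase x
    rw [mem_chainSet_cons] at h1
    have hTx0 : T x ∈ chainSet S [u₀] x := h1.1
    have hymem : y ∈ chainSet S [u₀] x := by
      rw [mem_chainSet_cons]
      exact ⟨hy, hyle.trans hTx0.2⟩
    have hK0 : IsCompact (chainSet S [u₀] x) :=
      (chainSet_isCompact_nonempty hS hne [u₀]
        (by intro u hu; rcases List.mem_singleton.mp hu with rfl; exact h₀) x).1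
    exact h1.2.trans (csInf_le (hK0.image (cont_app h₁ x)).bddBelow ⟨y, hymem, rfl⟩)

end WDROsel

set_option linter.unusedSectionVars false
set_option linter.unusedVariables false
set_option maxHeartbeats 2000000

open MeasureTheory Filter Set Topology WDROsel in
/-- Strong duality for unregularized WDRO on a compact set, with attainment. -/
theorem stmt_19 {d : ℕ} (S : Set (EuclideanSpace ℝ (Fin d))) (hS : IsCompact S)
    (P : Measure (EuclideanSpace ℝ (Fin d))) [IsProbabilityMeasure P] (hP : P S = 1)
    (f : EuclideanSpace ℝ (Fin d) → ℝ) (hf : ContinuousOn f S)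
    (c : EuclideanSpace ℝ (Fin d) × EuclideanSpace ℝ (Fin d) → ℝ)
    (hc : ContinuousOn c (S ×ˢ S)) (hc_nonneg : ∀ z ∈ S ×ˢ S, 0 ≤ c z)
    (hc_diag : ∀ x ∈ S, c (x, x) = 0)
    (ρ : ℝ) (hρ : 0 < ρ) :
    sSup {r : ℝ | ∃ π : Measure (EuclideanSpace ℝ (Fin d) × EuclideanSpace ℝ (Fin d)),
        IsProbabilityMeasure π ∧ π (S ×ˢ S) = 1 ∧ π.fst = P ∧ (∫ z, c z ∂π) ≤ ρ ∧
        r = ∫ z, f z.2 ∂π}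
      = sInf {r : ℝ | ∃ lam : ℝ, 0 ≤ lam ∧
          r = lam * ρ + ∫ x, sSup ((fun y => f y - lam * c (x, y)) '' S) ∂P} ∧
    (∃ π : Measure (EuclideanSpace ℝ (Fin d) × EuclideanSpace ℝ (Fin d)),
        IsProbabilityMeasure π ∧ π (S ×ˢ S) = 1 ∧ π.fst = P ∧ (∫ z, c z ∂π) ≤ ρ ∧
        (∫ z, f z.2 ∂π) =
          sSup {r : ℝ | ∃ π' : Measure (EuclideanSpace ℝ (Fin d) × EuclideanSpace ℝ (Fin d)),
            IsProbabilityMeasure π' ∧ π' (S ×ˢ S) = 1 ∧ π'.fst = P ∧ (∫ z, c z ∂π') ≤ ρ ∧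
            r = ∫ z, f z.2 ∂π'}) ∧
    (∃ lam : ℝ, 0 ≤ lam ∧
        lam * ρ + (∫ x, sSup ((fun y => f y - lam * c (x, y)) '' S) ∂P) =
          sInf {r : ℝ | ∃ lam' : ℝ, 0 ≤ lam' ∧
            r = lam' * ρ + ∫ x, sSup ((fun y => f y - lam' * c (x, y)) '' S) ∂P}) := by
  classical
  -- ## Setup
  have hSne : S.Nonempty := by
    rcases S.eq_empty_or_nonempty with h | h
    · exfalso; rw [h] at hP; simp at hP
    · exact h
  have hScl : IsClosed S := hS.isClosed
  have hSS : IsCompact (S ×ˢ S) := hS.prod hS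
  have hSSm : MeasurableSet (S ×ˢ S) := hSS.isClosed.measurableSet
  -- ## Tietze extensions
  obtain ⟨ftc, hftc⟩ := ContinuousMap.exists_restrict_eq (Y := ℝ) hScl
    ⟨S.restrict f, continuousOn_iff_continuous_restrict.mp hf⟩
  set ft : EuclideanSpace ℝ (Fin d) → ℝ := fun y => ftc y with hftdef
  have hft : ∀ y ∈ S, ft y = f y := by
    intro y hy
    exact congrFun (congrArg ContinuousMap.toFun hftc) ⟨y, hy⟩
  have hftcont : Continuous ft := ftc.continuous
  obtain ⟨ctc0, hctc0⟩ := ContinuousMap.exists_restrict_eq (Y := ℝ) hSS.isClosed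
    ⟨(S ×ˢ S).restrict c, continuousOn_iff_continuous_restrict.mp hc⟩
  set ct : EuclideanSpace ℝ (Fin d) × EuclideanSpace ℝ (Fin d) → ℝ :=
    fun z => max (ctc0 z) 0 with hctdef
  have hctcont : Continuous ct := ctc0.continuous.max continuous_const
  have hct : ∀ z ∈ S ×ˢ S, ct z = c z := by
    intro z hz
    have h1 : ctc0 z = c z := congrFun (congrArg ContinuousMap.toFun hctc0) ⟨z, hz⟩
    rw [hctdef]; simp only []
    rw [h1]
    exact max_eq_left (hc_nonneg z hz)
  have hct0 : ∀ z, 0 ≤ ct z := fun z => le_max_right _ _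
  have hctdiag : ∀ x ∈ S, ct (x, x) = 0 := by
    intro x hx; rw [hct (x, x) ⟨hx, hx⟩]; exact hc_diag x hx
  -- ## bounds
  obtain ⟨Bf, hBf⟩ := hS.exists_bound_of_continuousOn hftcont.continuousOn
  obtain ⟨Cm0, hCm0⟩ := hSS.exists_bound_of_continuousOn hctcont.continuousOn
  set Cm : ℝ := max Cm0 0 with hCmdef
  have hCm_nonneg : 0 ≤ Cm := le_max_right _ _
  have hCm : ∀ z ∈ S ×ˢ S, ct z ≤ Cm := by
    intro z hz
    calc ct z ≤ ‖ct z‖ := le_abs_self _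
    _ ≤ Cm0 := hCm0 z hz
    _ ≤ Cm := le_max_left _ _
  have hBf_nonneg : 0 ≤ Bf := le_trans (norm_nonneg _) (hBf _ hSne.choose_spec)
  -- ## the dual integrand
  set gt : ℝ → EuclideanSpace ℝ (Fin d) → ℝ :=
    fun l x => sSup ((fun y => ft y - l * ct (x, y)) '' S) with hgtdef
  have hcxy : ∀ l : ℝ, Continuous fun q : EuclideanSpace ℝ (Fin d) × EuclideanSpace ℝ (Fin d) =>
      ft q.2 - l * ct (q.1, q.2) := by
    intro l
    exact (hftcont.comp continuous_snd).sub
      (continuous_const.mul (hctcont.comp (continuous_fst.prodMk continuous_snd)))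
  have hgtc : ∀ l, Continuous (gt l) := fun l => hS.continuous_sSup (hcxy l)
  have hgt_mem : ∀ (l : ℝ) (x), ∃ y ∈ S, gt l x = ft y - l * ct (x, y) := by
    intro l x
    have hcy : Continuous fun y => ft y - l * ct (x, y) :=
      (hcxy l).comp (Continuous.prodMk_right x)
    obtain ⟨y, hy, hval⟩ := ((hS.image hcy).sSup_mem (hSne.image _))
    exact ⟨y, hy, hval.symm⟩
  have hgt_le : ∀ (l : ℝ) (x), ∀ y ∈ S, ft y - l * ct (x, y) ≤ gt l x := by
    intro l x y hy
    have hcy : Continuous fun y => ft y - l * ct (x, y) :=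
      (hcxy l).comp (Continuous.prodMk_right x)
    exact le_csSup (hS.image hcy).bddAbove ⟨y, hy, rfl⟩
  have hgt_lb : ∀ (l : ℝ), ∀ x ∈ S, ft x ≤ gt l x := by
    intro l x hx
    have := hgt_le l x x hx
    rw [hctdiag x hx] at this
    simpa using this
  have hgt_ub : ∀ (l : ℝ), 0 ≤ l → ∀ x, gt l x ≤ Bf := by
    intro l hl x
    obtain ⟨y, hy, hval⟩ := hgt_mem l x
    rw [hval]
    have h1 : ft y ≤ Bf := (abs_le.mp (by simpa using hBf y hy)).2
    have h2 : 0 ≤ l * ct (x, y) := mul_nonneg hl (hct0 _)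
    linarith
  have hgt_bound : ∀ (l : ℝ), 0 ≤ l → ∀ x ∈ S, ‖gt l x‖ ≤ Bf := by
    intro l hl x hx
    rw [Real.norm_eq_abs, abs_le]
    constructor
    · have h1 := hgt_lb l x hx
      have h2 : -Bf ≤ ft x := (abs_le.mp (by simpa using hBf x hx)).1
      linarith
    · exact hgt_ub l hl x
  -- ## a.e. facts and integrability
  have hPS : ∀ᵐ x ∂P, x ∈ S := by
    have hc : P Sᶜ = 0 := by
      rw [measure_compl hScl.measurableSet (by simp), hP]
      simp
    rw [ae_iff]
    exact hc
  have intP : ∀ (φ : EuclideanSpace ℝ (Fin d) → ℝ) (B : ℝ), Continuous φ →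
      (∀ x ∈ S, ‖φ x‖ ≤ B) → Integrable φ P := by
    intro φ B hφ hb
    refine Integrable.mono' (integrable_const B) hφ.aestronglyMeasurable ?_
    filter_upwards [hPS] with x hx using hb x hx
  have int_gt : ∀ l : ℝ, 0 ≤ l → Integrable (gt l) P :=
    fun l hl => intP (gt l) Bf (hgtc l) (hgt_bound l hl)
  have int_ft : Integrable ft P := intP ft Bf hftcont (fun x hx => by simpa using hBf x hx)
  -- ## the dual function v
  set vI : ℝ → ℝ := fun l => ∫ x, gt l x ∂P with hvIdef
  set v : ℝ → ℝ := fun l => l * ρ + vI l with hvdef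
  set If : ℝ := ∫ x, ft x ∂P with hIfdef
  -- pointwise Lipschitz estimate for gt in l
  have hgt_lip : ∀ (l m : ℝ) (x : EuclideanSpace ℝ (Fin d)), x ∈ S →
      |gt l x - gt m x| ≤ Cm * |l - m| := by
    intro l m x hx
    have key : ∀ l' m' : ℝ, gt l' x - gt m' x ≤ Cm * |l' - m'| := by
      intro l' m'
      obtain ⟨y, hy, hval⟩ := hgt_mem l' x
      have h1 : ft y - m' * ct (x, y) ≤ gt m' x := hgt_le m' x y hy
      have h2 : ct (x, y) ≤ Cm := hCm (x, y) ⟨hx, hy⟩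
      have h3 : (m' - l') * ct (x, y) ≤ |l' - m'| * Cm := by
        calc (m' - l') * ct (x, y) ≤ |m' - l'| * ct (x, y) :=
          mul_le_mul_of_nonneg_right (le_abs_self _) (hct0 _)
        _ ≤ |m' - l'| * Cm := mul_le_mul_of_nonneg_left h2 (abs_nonneg _)
        _ = |l' - m'| * Cm := by rw [abs_sub_comm]
      rw [hval]
      nlinarith [hct0 (x, y)]
    rw [abs_sub_le_iff]
    constructor
    · have := key l m; linarith [this, mul_comm Cm |l - m|]
    · have := key m l; rw [abs_sub_comm] at this; linarith
  have hvI_lip : ∀ l m : ℝ, 0 ≤ l → 0 ≤ m → |vI l - vI m| ≤ Cm * |l - m| := by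
    intro l m hl hm
    have h1 : vI l - vI m = ∫ x, (gt l x - gt m x) ∂P :=
      (integral_sub (int_gt l hl) (int_gt m hm)).symm
    rw [h1]
    calc |∫ x, (gt l x - gt m x) ∂P| ≤ ∫ x, |gt l x - gt m x| ∂P := by
          simpa [Real.norm_eq_abs] using
            norm_integral_le_integral_norm (fun x => gt l x - gt m x) (μ := P)
    _ ≤ ∫ _x, Cm * |l - m| ∂P := by
          refine integral_mono_ae (((int_gt l hl).sub (int_gt m hm)).abs) (integrable_const _) ?_
          filter_upwards [hPS] with x hx using hgt_lip l m x hx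
    _ = Cm * |l - m| := by simp
  have hv_contOn : ContinuousOn v (Set.Ici (0:ℝ)) := by
    intro l hl
    have : ∀ ε > 0, ∃ δ > 0, ∀ m ∈ Set.Ici (0:ℝ), |m - l| < δ → |v m - v l| < ε := by
      intro ε hε
      refine ⟨ε / (ρ + Cm + 1), by positivity, fun m hm hml => ?_⟩
      have h1 : |v m - v l| ≤ (ρ + Cm) * |m - l| := by
        have h2 := hvI_lip m l hm hl
        have h3 : v m - v l = (m - l) * ρ + (vI m - vI l) := by simp [hvdef]; ring
        rw [h3]
        calc |(m - l) * ρ + (vI m - vI l)| ≤ |(m - l) * ρ| + |vI m - vI l| := abs_add_le _ _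
        _ ≤ |m - l| * ρ + Cm * |m - l| := by
              rw [abs_mul, abs_of_pos hρ]; linarith
        _ = (ρ + Cm) * |m - l| := by ring
      calc |v m - v l| ≤ (ρ + Cm) * |m - l| := h1
      _ < (ρ + Cm + 1) * (ε / (ρ + Cm + 1)) := by
            apply mul_lt_mul' (by linarith) hml (abs_nonneg _) (by positivity)
      _ = ε := by field_simp
    rw [Metric.continuousWithinAt_iff]
    intro ε hε
    obtain ⟨δ, hδ, hh⟩ := this ε hε
    exact ⟨δ, hδ, fun {m} hm hml => hh m hm (by rwa [Real.dist_eq] at hml)⟩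
  -- ## existence of the dual optimizer lam
  have hvlb : ∀ l : ℝ, 0 ≤ l → l * ρ + If ≤ v l := by
    intro l hl
    have hae : ∀ᵐ x ∂P, ft x ≤ gt l x := by
      filter_upwards [hPS] with x hx using hgt_lb l x hx
    have := integral_mono_ae int_ft (int_gt l hl) hae
    simp only [hvdef]
    linarith [this]
  obtain ⟨lam, hlamIcc, hlammin⟩ :
      ∃ lam ∈ Set.Icc (0:ℝ) (max 1 ((v 0 - If + 1)/ρ)),
        ∀ l ∈ Set.Icc (0:ℝ) (max 1 ((v 0 - If + 1)/ρ)), v lam ≤ v l := by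
    set N := max 1 ((v 0 - If + 1)/ρ) with hNdef
    have hN1 : (1:ℝ) ≤ N := le_max_left _ _
    obtain ⟨lam, hmem, hmin⟩ := isCompact_Icc.exists_isMinOn (s := Set.Icc (0:ℝ) N)
      ⟨0, le_rfl, by linarith⟩ (hv_contOn.mono (fun t ht => ht.1))
    exact ⟨lam, hmem, fun l hl => hmin hl⟩
  have hlam0 : 0 ≤ lam := hlamIcc.1
  have hlammin : ∀ l : ℝ, 0 ≤ l → v lam ≤ v l := by
    intro l hl
    set N := max 1 ((v 0 - If + 1)/ρ) with hNdef
    by_cases hlN : l ≤ N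
    · exact hlammin l ⟨hl, hlN⟩
    · push_neg at hlN
      have hN1 : (1:ℝ) ≤ N := le_max_left _ _
      have h0 : v lam ≤ v 0 := hlammin 0 ⟨le_rfl, by linarith⟩
      have h2 : (v 0 - If + 1)/ρ ≤ N := le_max_right _ _
      have h3 : v 0 - If + 1 ≤ N * ρ := by
        rw [div_le_iff₀ hρ] at h2; linarith
      have h4 : N * ρ ≤ l * ρ := by nlinarith
      have h5 := hvlb l hl
      linarith

  -- ## measurable selections at lam
  set u0 : EuclideanSpace ℝ (Fin d) → EuclideanSpace ℝ (Fin d) → ℝ :=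
    fun x y => lam * ct (x, y) - ft y with hu0def
  have hu0c : Continuous ↿u0 := by
    exact (continuous_const.mul (hctcont.comp (continuous_fst.prodMk continuous_snd))).sub
      (hftcont.comp continuous_snd)
  have hctc2 : Continuous ↿(fun x y : EuclideanSpace ℝ (Fin d) => ct (x, y)) :=
    hctcont.comp (continuous_fst.prodMk continuous_snd)
  obtain ⟨Tlo, hTlo_meas, hTlo_mem, hTlo_min, hTlo_sel⟩ :=
    exists_selection hS hSne u0 (fun x y => ct (x, y)) hu0c hctc2
  obtain ⟨Thi, hThi_meas, hThi_mem, hThi_min, hThi_sel⟩ :=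
    exists_selection hS hSne u0 (fun x y => -ct (x, y)) hu0c hctc2.neg
  -- argmax characterizations
  have hmax_of_min : ∀ (T : EuclideanSpace ℝ (Fin d) → EuclideanSpace ℝ (Fin d)),
      (∀ x, T x ∈ S) → (∀ x, ∀ y ∈ S, u0 x (T x) ≤ u0 x y) →
      ∀ x, ft (T x) - lam * ct (x, T x) = gt lam x := by
    intro T hmem hmin x
    apply le_antisymm (hgt_le lam x _ (hmem x))
    obtain ⟨y, hy, hEq⟩ := hgt_mem lam x
    have h1 := hmin x y hy
    simp only [hu0def] at h1
    rw [hEq]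
    linarith
  have hTlo_max : ∀ x, ft (Tlo x) - lam * ct (x, Tlo x) = gt lam x :=
    hmax_of_min Tlo hTlo_mem hTlo_min
  have hThi_max : ∀ x, ft (Thi x) - lam * ct (x, Thi x) = gt lam x :=
    hmax_of_min Thi hThi_mem hThi_min
  have hTlo_opt : ∀ x, ∀ y ∈ S, ft y - lam * ct (x, y) = gt lam x →
      ct (x, Tlo x) ≤ ct (x, y) := by
    intro x y hy hymax
    apply hTlo_sel x y hy
    have h1 := hTlo_max x
    simp only [hu0def]
    linarith
  have hThi_opt : ∀ x, ∀ y ∈ S, ft y - lam * ct (x, y) = gt lam x →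
      ct (x, y) ≤ ct (x, Thi x) := by
    intro x y hy hymax
    have h2 : -ct (x, Thi x) ≤ -ct (x, y) := by
      apply hThi_sel x y hy
      have h1 := hThi_max x
      simp only [hu0def]
      linarith
    linarith
  -- pointwise optimal costs
  set m0 : EuclideanSpace ℝ (Fin d) → ℝ := fun x => ct (x, Tlo x) with hm0def
  set M0 : EuclideanSpace ℝ (Fin d) → ℝ := fun x => ct (x, Thi x) with hM0def
  have hm0_meas : Measurable m0 :=
    hctcont.measurable.comp (measurable_id.prodMk hTlo_meas)
  have hM0_meas : Measurable M0 :=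
    hctcont.measurable.comp (measurable_id.prodMk hThi_meas)
  have hm0_nonneg : ∀ x, 0 ≤ m0 x := fun x => hct0 _
  have hM0_nonneg : ∀ x, 0 ≤ M0 x := fun x => hct0 _
  have hm0_bd : ∀ x ∈ S, m0 x ≤ Cm := fun x hx => hCm _ ⟨hx, hTlo_mem x⟩
  have hM0_bd : ∀ x ∈ S, M0 x ≤ Cm := fun x hx => hCm _ ⟨hx, hThi_mem x⟩
  have int_m0 : Integrable m0 P := by
    refine Integrable.mono' (integrable_const Cm) hm0_meas.aestronglyMeasurable ?_
    filter_upwards [hPS] with x hx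
    rw [Real.norm_eq_abs, abs_of_nonneg (hm0_nonneg x)]
    exact hm0_bd x hx
  have int_M0 : Integrable M0 P := by
    refine Integrable.mono' (integrable_const Cm) hM0_meas.aestronglyMeasurable ?_
    filter_upwards [hPS] with x hx
    rw [Real.norm_eq_abs, abs_of_nonneg (hM0_nonneg x)]
    exact hM0_bd x hx
  set a : ℝ := ∫ x, m0 x ∂P with hadef
  set b : ℝ := ∫ x, M0 x ∂P with hbdef

  -- ## key inequality a ≤ ρ  (right derivative of v at lam)
  have key_a : a ≤ ρ := by
    set sn : ℕ → ℝ := fun n => 1/(n+1) with hsndef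
    have hsn_pos : ∀ n : ℕ, 0 < sn n := fun n => by positivity
    set q : ℕ → EuclideanSpace ℝ (Fin d) → ℝ :=
      fun n x => (gt lam x - gt (lam + sn n) x) / sn n with hqdef
    have hq_le_m0 : ∀ n x, q n x ≤ m0 x := by
      intro n x
      have h1 : ft (Tlo x) - (lam + sn n) * ct (x, Tlo x) ≤ gt (lam + sn n) x :=
        hgt_le _ x _ (hTlo_mem x)
      have h2 := hTlo_max x
      rw [hqdef]; dsimp only
      rw [div_le_iff₀ (hsn_pos n)]
      simp only [hm0def]
      nlinarith [hsn_pos n]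
    have hgt_anti : ∀ n x, gt (lam + sn n) x ≤ gt lam x := by
      intro n x
      apply csSup_le (hSne.image _)
      rintro r ⟨y, hy, rfl⟩
      have h1 : ft y - lam * ct (x, y) ≤ gt lam x := hgt_le lam x y hy
      have h2 : 0 ≤ sn n * ct (x, y) := mul_nonneg (hsn_pos n).le (hct0 _)
      show ft y - (lam + sn n) * ct (x, y) ≤ gt lam x
      nlinarith
    have hq_nonneg : ∀ n x, 0 ≤ q n x := by
      intro n x
      apply div_nonneg _ (hsn_pos n).le
      linarith [hgt_anti n x]
    have hq_int_le : ∀ n, (∫ x, q n x ∂P) ≤ ρ := by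
      intro n
      have hv := hlammin (lam + sn n) (by positivity)
      have h1 : vI lam - vI (lam + sn n) ≤ sn n * ρ := by
        simp only [hvdef] at hv; nlinarith
      have h2 : (∫ x, q n x ∂P) = (vI lam - vI (lam + sn n)) / sn n := by
        rw [hqdef]
        simp only
        rw [integral_div]
        congr 1
        exact integral_sub (int_gt lam hlam0) (int_gt (lam + sn n) (by positivity))
      rw [h2, div_le_iff₀ (hsn_pos n)]
      linarith [h1]
    have hq_tendsto : ∀ x, Tendsto (fun n => q n x) atTop (𝓝 (m0 x)) := by
      intro x
      have hlow : ∀ ε : ℝ, 0 < ε → ∀ᶠ n in atTop, m0 x - ε < q n x := by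
        intro ε hε
        by_contra hcon
        rw [Filter.not_eventually] at hcon
        have hcon' : ∃ᶠ n in atTop, q n x ≤ m0 x - ε := hcon.mono fun n h => not_lt.mp h
        obtain ⟨φ, hφmono, hφ⟩ := Filter.extraction_of_frequently_atTop hcon'
        choose ys hysS hysEq using fun k => hgt_mem (lam + sn (φ k)) x
        have hqk : ∀ k, ct (x, ys k) ≤ q (φ k) x := by
          intro k
          have h1 := hysEq k
          have h2 : ft (ys k) - lam * ct (x, ys k) ≤ gt lam x := hgt_le lam x _ (hysS k)
          rw [hqdef]; dsimp only
          rw [le_div_iff₀ (hsn_pos (φ k))]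
          nlinarith [hsn_pos (φ k)]
        have hctk : ∀ k, ct (x, ys k) ≤ m0 x - ε := fun k => (hqk k).trans (hφ k)
        have happrox : ∀ k, gt lam x - sn (φ k) * m0 x ≤ ft (ys k) - lam * ct (x, ys k) := by
          intro k
          have h1 := hysEq k
          have h2 : gt lam x - sn (φ k) * m0 x ≤ gt (lam + sn (φ k)) x := by
            have h3 := hq_le_m0 (φ k) x
            rw [hqdef] at h3; dsimp only at h3
            rw [div_le_iff₀ (hsn_pos (φ k))] at h3
            nlinarith
          have h3 : 0 ≤ sn (φ k) * ct (x, ys k) := mul_nonneg (hsn_pos _).le (hct0 _)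
          nlinarith
        obtain ⟨yL, hyLS, ψ, hψmono, htend0⟩ := hS.tendsto_subseq (x := ys) hysS
        have htend : Tendsto (fun j => ys (ψ j)) atTop (𝓝 yL) := htend0
        have hcont1 : Tendsto (fun j => ft (ys (ψ j)) - lam * ct (x, ys (ψ j))) atTop
            (𝓝 (ft yL - lam * ct (x, yL))) := by
          have hcy : Continuous fun y => ft y - lam * ct (x, y) :=
            (hcxy lam).comp (Continuous.prodMk_right x)
          exact (hcy.tendsto yL).comp htend
        have hs_to : Tendsto (fun j => sn (φ (ψ j))) atTop (𝓝 0) := by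
          apply squeeze_zero (fun j => (hsn_pos _).le) (g := fun j : ℕ => 1/(j+1))
          · intro j
            rw [hsndef]
            apply one_div_le_one_div_of_le (by positivity)
            have : (j : ℕ) ≤ φ (ψ j) := le_trans hψmono.le_apply hφmono.le_apply
            exact_mod_cast Nat.succ_le_succ this
          · exact tendsto_one_div_add_atTop_nhds_zero_nat
        have hmax_lim : ft yL - lam * ct (x, yL) = gt lam x := by
          apply le_antisymm (hgt_le lam x yL hyLS)
          have h4 : Tendsto (fun j => gt lam x - sn (φ (ψ j)) * m0 x) atTop (𝓝 (gt lam x)) := by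
            have h5 : Tendsto (fun j => sn (φ (ψ j)) * m0 x) atTop (𝓝 0) := by
              simpa using hs_to.mul_const (m0 x)
            simpa using tendsto_const_nhds.sub h5
          exact le_of_tendsto_of_tendsto' h4 hcont1 (fun j => happrox (ψ j))
        have h5 : m0 x ≤ ct (x, yL) := hTlo_opt x yL hyLS hmax_lim
        have h6 : Tendsto (fun j => ct (x, ys (ψ j))) atTop (𝓝 (ct (x, yL))) :=
          ((hctcont.comp (Continuous.prodMk_right x)).tendsto yL).comp htend
        have h7 : ct (x, yL) ≤ m0 x - ε :=
          le_of_tendsto h6 (Filter.Eventually.of_forall (fun j => hctk (ψ j)))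
        linarith
      refine Metric.tendsto_atTop.mpr fun ε hε => ?_
      obtain ⟨N₀, hN₀⟩ := (hlow (ε/2) (by positivity)).exists_forall_of_atTop
      refine ⟨N₀, fun n hn => ?_⟩
      have h1 := hN₀ n hn
      have h2 := hq_le_m0 n x
      rw [Real.dist_eq, abs_lt]
      constructor <;> linarith
    have hDCT : Tendsto (fun n => ∫ x, q n x ∂P) atTop (𝓝 a) := by
      rw [hadef]
      refine tendsto_integral_of_dominated_convergence (fun _ => Cm) ?_ (integrable_const Cm)
        ?_ ?_
      · intro n
        exact (((hgtc lam).sub (hgtc (lam + sn n))).div_const _).aestronglyMeasurable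
      · intro n
        filter_upwards [hPS] with x hx
        rw [Real.norm_eq_abs, abs_of_nonneg (hq_nonneg n x)]
        exact (hq_le_m0 n x).trans (hm0_bd x hx)
      · exact Filter.Eventually.of_forall (fun x => hq_tendsto x)
    exact le_of_tendsto hDCT (Filter.Eventually.of_forall hq_int_le)

  -- ## key inequality: lam > 0 → ρ ≤ b  (left derivative of v at lam)
  have key_b : 0 < lam → ρ ≤ b := by
    intro hlpos
    set sn : ℕ → ℝ := fun n => lam/(n+2) with hsndef
    have hsn_pos : ∀ n : ℕ, 0 < sn n := fun n => by positivity
    have hsn_le : ∀ n : ℕ, sn n ≤ lam := by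
      intro n
      rw [hsndef]; dsimp only
      rw [div_le_iff₀ (by positivity)]
      nlinarith [Nat.cast_nonneg (α := ℝ) n]
    have hlam_sub : ∀ n, 0 ≤ lam - sn n := fun n => sub_nonneg.mpr (hsn_le n)
    set r : ℕ → EuclideanSpace ℝ (Fin d) → ℝ :=
      fun n x => (gt (lam - sn n) x - gt lam x) / sn n with hrdef
    have hr_ge_M0 : ∀ n x, M0 x ≤ r n x := by
      intro n x
      have h1 : ft (Thi x) - (lam - sn n) * ct (x, Thi x) ≤ gt (lam - sn n) x :=
        hgt_le _ x _ (hThi_mem x)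
      have h2 := hThi_max x
      rw [hrdef]; dsimp only
      rw [le_div_iff₀ (hsn_pos n)]
      simp only [hM0def]
      nlinarith
    have hr_nonneg : ∀ n x, 0 ≤ r n x := fun n x => le_trans (hM0_nonneg x) (hr_ge_M0 n x)
    have hr_le_ct : ∀ (n : ℕ) (x), ∃ y ∈ S, gt (lam - sn n) x = ft y - (lam - sn n) * ct (x, y)
        ∧ r n x ≤ ct (x, y) := by
      intro n x
      obtain ⟨y, hy, hEq⟩ := hgt_mem (lam - sn n) x
      refine ⟨y, hy, hEq, ?_⟩
      have h2 : ft y - lam * ct (x, y) ≤ gt lam x := hgt_le lam x y hy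
      rw [hrdef]; dsimp only
      rw [div_le_iff₀ (hsn_pos n)]
      nlinarith
    have hr_bd : ∀ n, ∀ x ∈ S, r n x ≤ Cm := by
      intro n x hx
      obtain ⟨y, hy, _, h⟩ := hr_le_ct n x
      exact h.trans (hCm (x, y) ⟨hx, hy⟩)
    have hr_int_ge : ∀ n, ρ ≤ ∫ x, r n x ∂P := by
      intro n
      have hv := hlammin (lam - sn n) (hlam_sub n)
      have h1 : sn n * ρ ≤ vI (lam - sn n) - vI lam := by
        simp only [hvdef] at hv; nlinarith
      have h2 : (∫ x, r n x ∂P) = (vI (lam - sn n) - vI lam) / sn n := by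
        rw [hrdef]
        simp only
        rw [integral_div]
        congr 1
        exact integral_sub (int_gt (lam - sn n) (hlam_sub n)) (int_gt lam hlam0)
      rw [h2, le_div_iff₀ (hsn_pos n)]
      linarith [h1]
    have hr_tendsto : ∀ x, Tendsto (fun n => r n x) atTop (𝓝 (M0 x)) := by
      intro x
      obtain ⟨Bx, hBx⟩ := hS.exists_bound_of_continuousOn
        (hctcont.comp (Continuous.prodMk_right x)).continuousOn
      have hBx' : ∀ y ∈ S, ct (x, y) ≤ Bx := by
        intro y hy
        have := hBx y hy
        rw [Real.norm_eq_abs] at this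
        exact (abs_le.mp this).2
      have hup : ∀ ε : ℝ, 0 < ε → ∀ᶠ n in atTop, r n x < M0 x + ε := by
        intro ε hε
        by_contra hcon
        rw [Filter.not_eventually] at hcon
        have hcon' : ∃ᶠ n in atTop, M0 x + ε ≤ r n x := hcon.mono fun n h => not_lt.mp h
        obtain ⟨φ, hφmono, hφ⟩ := Filter.extraction_of_frequently_atTop hcon'
        choose ys hysS hysEq hysr using fun k => hr_le_ct (φ k) x
        have hctk : ∀ k, M0 x + ε ≤ ct (x, ys k) := fun k => (hφ k).trans (hysr k)
        have happrox : ∀ k, gt lam x - sn (φ k) * Bx ≤ ft (ys k) - lam * ct (x, ys k) := by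
          intro k
          have h1 := hysEq k
          have h2 : gt lam x + sn (φ k) * M0 x ≤ gt (lam - sn (φ k)) x := by
            have h3 := hr_ge_M0 (φ k) x
            rw [hrdef] at h3; dsimp only at h3
            rw [le_div_iff₀ (hsn_pos (φ k))] at h3
            nlinarith
          have h4 : ct (x, ys k) ≤ Bx := hBx' _ (hysS k)
          have h5 : 0 ≤ sn (φ k) := (hsn_pos _).le
          have h6 : 0 ≤ M0 x := hM0_nonneg x
          nlinarith
        obtain ⟨yL, hyLS, ψ, hψmono, htend0⟩ := hS.tendsto_subseq (x := ys) hysS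
        have htend : Tendsto (fun j => ys (ψ j)) atTop (𝓝 yL) := htend0
        have hcont1 : Tendsto (fun j => ft (ys (ψ j)) - lam * ct (x, ys (ψ j))) atTop
            (𝓝 (ft yL - lam * ct (x, yL))) := by
          have hcy : Continuous fun y => ft y - lam * ct (x, y) :=
            (hcxy lam).comp (Continuous.prodMk_right x)
          exact (hcy.tendsto yL).comp htend
        have hs_to : Tendsto (fun j => sn (φ (ψ j))) atTop (𝓝 0) := by
          apply squeeze_zero (fun j => (hsn_pos _).le) (g := fun j : ℕ => lam/(j+2))
          · intro j
            rw [hsndef]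
            apply div_le_div_of_nonneg_left hlpos.le ?_ ?_
            · positivity
            · have : (j : ℕ) ≤ φ (ψ j) := le_trans hψmono.le_apply hφmono.le_apply
              have h7 : (j : ℝ) ≤ (φ (ψ j) : ℝ) := by exact_mod_cast this
              linarith
          · apply Tendsto.div_atTop tendsto_const_nhds
            exact tendsto_atTop_add_const_right atTop 2 tendsto_natCast_atTop_atTop
        have hmax_lim : ft yL - lam * ct (x, yL) = gt lam x := by
          apply le_antisymm (hgt_le lam x yL hyLS)
          have h4 : Tendsto (fun j => gt lam x - sn (φ (ψ j)) * Bx) atTop (𝓝 (gt lam x)) := by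
            have h5 : Tendsto (fun j => sn (φ (ψ j)) * Bx) atTop (𝓝 0) := by
              simpa using hs_to.mul_const Bx
            simpa using tendsto_const_nhds.sub h5
          exact le_of_tendsto_of_tendsto' h4 hcont1 (fun j => happrox (ψ j))
        have h5 : ct (x, yL) ≤ M0 x := hThi_opt x yL hyLS hmax_lim
        have h6 : Tendsto (fun j => ct (x, ys (ψ j))) atTop (𝓝 (ct (x, yL))) :=
          ((hctcont.comp (Continuous.prodMk_right x)).tendsto yL).comp htend
        have h7 : M0 x + ε ≤ ct (x, yL) :=
          ge_of_tendsto h6 (Filter.Eventually.of_forall (fun j => hctk (ψ j)))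
        linarith
      refine Metric.tendsto_atTop.mpr fun ε hε => ?_
      obtain ⟨N₀, hN₀⟩ := (hup (ε/2) (by positivity)).exists_forall_of_atTop
      refine ⟨N₀, fun n hn => ?_⟩
      have h1 := hN₀ n hn
      have h2 := hr_ge_M0 n x
      rw [Real.dist_eq, abs_lt]
      constructor <;> linarith
    have hDCT : Tendsto (fun n => ∫ x, r n x ∂P) atTop (𝓝 b) := by
      rw [hbdef]
      refine tendsto_integral_of_dominated_convergence (fun _ => Cm) ?_ (integrable_const Cm)
        ?_ ?_
      · intro n
        exact (((hgtc (lam - sn n)).sub (hgtc lam)).div_const _).aestronglyMeasurable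
      · intro n
        filter_upwards [hPS] with x hx
        rw [Real.norm_eq_abs, abs_of_nonneg (hr_nonneg n x)]
        exact hr_bd n x hx
      · exact Filter.Eventually.of_forall (fun x => hr_tendsto x)
    exact ge_of_tendsto hDCT (Filter.Eventually.of_forall hr_int_ge)

  -- ## couplings induced by transport maps
  have coupling : ∀ (T : EuclideanSpace ℝ (Fin d) → EuclideanSpace ℝ (Fin d)),
      Measurable T → (∀ x, T x ∈ S) →
      IsProbabilityMeasure (P.map (fun x => (x, T x))) ∧
      (P.map (fun x => (x, T x))) (S ×ˢ S) = 1 ∧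
      (P.map (fun x => (x, T x))).fst = P ∧
      (∫ z, ct z ∂(P.map (fun x => (x, T x)))) = ∫ x, ct (x, T x) ∂P ∧
      (∫ z, ft z.2 ∂(P.map (fun x => (x, T x)))) = ∫ x, ft (T x) ∂P := by
    intro T hT hTS
    have hg : Measurable (fun x => (x, T x)) := measurable_id.prodMk hT
    refine ⟨Measure.isProbabilityMeasure_map hg.aemeasurable, ?_, ?_, ?_, ?_⟩
    · rw [Measure.map_apply hg hSSm]
      have hpre : (fun x => (x, T x)) ⁻¹' (S ×ˢ S) = S := by
        ext x
        simp only [Set.mem_preimage, Set.mem_prod]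
        exact ⟨fun h => h.1, fun h => ⟨h, hTS x⟩⟩
      rw [hpre, hP]
    · rw [show (P.map (fun x => (x, T x))).fst = (P.map (fun x => (x, T x))).map Prod.fst
        from rfl, Measure.map_map measurable_fst hg]
      have : (Prod.fst ∘ fun x => (x, T x)) = id := rfl
      rw [this, Measure.map_id]
    · exact integral_map hg.aemeasurable hctcont.aestronglyMeasurable
    · exact integral_map hg.aemeasurable (hftcont.comp continuous_snd).aestronglyMeasurable
  -- ## ae membership and integrability for feasible couplings
  have aeSS : ∀ (π : Measure (EuclideanSpace ℝ (Fin d) × EuclideanSpace ℝ (Fin d))),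
      IsProbabilityMeasure π → π (S ×ˢ S) = 1 → (∀ᵐ z ∂π, z ∈ S ×ˢ S) := by
    intro π hprob h1
    have hcompl : π (S ×ˢ S)ᶜ = 0 := by
      haveI := hprob
      rw [measure_compl hSSm (by simp), h1]
      simp
    rw [ae_iff]
    exact hcompl
  have intpi : ∀ (π : Measure (EuclideanSpace ℝ (Fin d) × EuclideanSpace ℝ (Fin d))),
      IsProbabilityMeasure π → π (S ×ˢ S) = 1 →
      ∀ (φ : EuclideanSpace ℝ (Fin d) × EuclideanSpace ℝ (Fin d) → ℝ) (B : ℝ),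
        Continuous φ → (∀ z ∈ S ×ˢ S, ‖φ z‖ ≤ B) → Integrable φ π := by
    intro π hprob h1 φ B hφ hb
    haveI := hprob
    refine Integrable.mono' (integrable_const B) hφ.aestronglyMeasurable ?_
    filter_upwards [aeSS π hprob h1] with z hz using hb z hz
  -- ## weak duality
  have weak : ∀ l : ℝ, 0 ≤ l →
      ∀ π : Measure (EuclideanSpace ℝ (Fin d) × EuclideanSpace ℝ (Fin d)),
      IsProbabilityMeasure π → π (S ×ˢ S) = 1 → π.fst = P →
      (∫ z, ct z ∂π) ≤ ρ → (∫ z, ft z.2 ∂π) ≤ v l := by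
    intro l hl π hprob h1 hfst hcost
    haveI := hprob
    have int1 : Integrable (fun z : EuclideanSpace ℝ (Fin d) × EuclideanSpace ℝ (Fin d) =>
        ft z.2) π :=
      intpi π hprob h1 _ Bf (hftcont.comp continuous_snd) (fun z hz => hBf z.2 hz.2)
    have int2 : Integrable (fun z : EuclideanSpace ℝ (Fin d) × EuclideanSpace ℝ (Fin d) =>
        gt l z.1) π :=
      intpi π hprob h1 _ Bf ((hgtc l).comp continuous_fst)
        (fun z hz => hgt_bound l hl z.1 hz.1)
    have int3 : Integrable ct π :=
      intpi π hprob h1 ct Cm hctcont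
        (fun z hz => by rw [Real.norm_eq_abs, abs_of_nonneg (hct0 z)]; exact hCm z hz)
    have hpt : ∀ᵐ z ∂π, ft z.2 ≤ gt l z.1 + l * ct z := by
      filter_upwards [aeSS π hprob h1] with z hz
      have h2 := hgt_le l z.1 z.2 hz.2
      have h3 : ct (z.1, z.2) = ct z := by rw [Prod.mk.eta]
      rw [h3] at h2
      linarith
    have h2 := integral_mono_ae int1 (int2.add (int3.const_mul l)) hpt
    have h6 : ∫ z, (gt l z.1 + l * ct z) ∂π = (∫ z, gt l z.1 ∂π) + l * ∫ z, ct z ∂π := by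
      rw [integral_add int2 (int3.const_mul l), integral_const_mul]
    simp only [Pi.add_apply] at h2
    rw [h6] at h2
    have h3 : (∫ z, gt l z.1 ∂π) = vI l := by
      have h4 : ∫ x, gt l x ∂(π.map Prod.fst) = ∫ z, gt l z.1 ∂π :=
        integral_map measurable_fst.aemeasurable (hgtc l).aestronglyMeasurable
      rw [← h4, show π.map Prod.fst = π.fst from rfl, hfst]
    have h5 : l * ∫ z, ct z ∂π ≤ l * ρ := mul_le_mul_of_nonneg_left hcost hl
    simp only [hvdef]
    linarith [h2, h3, h5]
  -- ## the optimal coupling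
  obtain ⟨piopt, hπprob, hπSS, hπfst, hπcost, hπobj⟩ :
      ∃ π : Measure (EuclideanSpace ℝ (Fin d) × EuclideanSpace ℝ (Fin d)),
        IsProbabilityMeasure π ∧ π (S ×ˢ S) = 1 ∧ π.fst = P ∧
        (∫ z, ct z ∂π) ≤ ρ ∧ (∫ z, ft z.2 ∂π) = v lam := by
    obtain ⟨hplo, hSSlo, hfstlo, hcostlo, hobjlo⟩ := coupling Tlo hTlo_meas hTlo_mem
    obtain ⟨hphi, hSShi, hfsthi, hcosthi, hobjhi⟩ := coupling Thi hThi_meas hThi_mem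
    have hftTlo : ∀ x, ft (Tlo x) = gt lam x + lam * m0 x := by
      intro x
      have h1 := hTlo_max x
      simp only [hm0def]
      linarith
    have hftThi : ∀ x, ft (Thi x) = gt lam x + lam * M0 x := by
      intro x
      have h1 := hThi_max x
      simp only [hM0def]
      linarith
    have hobjlo' : (∫ z, ft z.2 ∂(P.map (fun x => (x, Tlo x)))) = vI lam + lam * a := by
      rw [hobjlo]
      rw [show (fun x => ft (Tlo x)) = (fun x => gt lam x + lam * m0 x) from funext hftTlo]
      rw [integral_add (int_gt lam hlam0) (int_m0.const_mul lam), integral_const_mul]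
    have hobjhi' : (∫ z, ft z.2 ∂(P.map (fun x => (x, Thi x)))) = vI lam + lam * b := by
      rw [hobjhi]
      rw [show (fun x => ft (Thi x)) = (fun x => gt lam x + lam * M0 x) from funext hftThi]
      rw [integral_add (int_gt lam hlam0) (int_M0.const_mul lam), integral_const_mul]
    have hcostlo' : (∫ z, ct z ∂(P.map (fun x => (x, Tlo x)))) = a := hcostlo
    have hcosthi' : (∫ z, ct z ∂(P.map (fun x => (x, Thi x)))) = b := hcosthi
    rcases eq_or_lt_of_le hlam0 with hl0 | hlpos
    · refine ⟨P.map (fun x => (x, Tlo x)), hplo, hSSlo, hfstlo, ?_, ?_⟩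
      · rw [hcostlo']; exact key_a
      · rw [hobjlo', ← hl0]
        simp [hvdef]
    · have hb_ge : ρ ≤ b := key_b hlpos
      by_cases hab : a < b
      · set θ : ℝ := (b - ρ)/(b - a) with hθdef
        have hba : (0:ℝ) < b - a := by linarith
        have hθ0 : 0 ≤ θ := div_nonneg (by linarith) hba.le
        have hθ1 : θ ≤ 1 := by
          rw [hθdef, div_le_one hba]
          linarith [key_a]
        have hθsum : ENNReal.ofReal θ + ENNReal.ofReal (1-θ) = 1 := by
          rw [← ENNReal.ofReal_add hθ0 (by linarith)]
          norm_num
        have hθba : θ * (b - a) = b - ρ := div_mul_cancel₀ _ (ne_of_gt hba)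
        set πlo := P.map (fun x => (x, Tlo x)) with hπlodef
        set πhi := P.map (fun x => (x, Thi x)) with hπhidef
        set πmix := ENNReal.ofReal θ • πlo + ENNReal.ofReal (1 - θ) • πhi with hπmixdef
        have fst_smul : ∀ (cc : ENNReal)
            (μ : Measure (EuclideanSpace ℝ (Fin d) × EuclideanSpace ℝ (Fin d))),
            (cc • μ).fst = cc • μ.fst := fun cc μ => Measure.map_smul cc μ Prod.fst
        have hmixSS : πmix (S ×ˢ S) = 1 := by
          rw [hπmixdef]
          rw [Measure.coe_add, Pi.add_apply, Measure.smul_apply, Measure.smul_apply,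
            hSSlo, hSShi]
          simpa using hθsum
        have hmixprob : IsProbabilityMeasure πmix := by
          constructor
          rw [hπmixdef, Measure.coe_add, Pi.add_apply, Measure.smul_apply,
            Measure.smul_apply, measure_univ, measure_univ]
          simpa using hθsum
        have hmixfst : πmix.fst = P := by
          rw [hπmixdef, Measure.fst_add, fst_smul, fst_smul, hfstlo, hfsthi,
            ← add_smul, hθsum, one_smul]
        have intlo_ct : Integrable ct πlo :=
          intpi πlo hplo hSSlo ct Cm hctcont
            (fun z hz => by rw [Real.norm_eq_abs, abs_of_nonneg (hct0 z)]; exact hCm z hz)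
        have inthi_ct : Integrable ct πhi :=
          intpi πhi hphi hSShi ct Cm hctcont
            (fun z hz => by rw [Real.norm_eq_abs, abs_of_nonneg (hct0 z)]; exact hCm z hz)
        have intlo_ft : Integrable (fun z : EuclideanSpace ℝ (Fin d) ×
            EuclideanSpace ℝ (Fin d) => ft z.2) πlo :=
          intpi πlo hplo hSSlo _ Bf (hftcont.comp continuous_snd) (fun z hz => hBf z.2 hz.2)
        have inthi_ft : Integrable (fun z : EuclideanSpace ℝ (Fin d) ×
            EuclideanSpace ℝ (Fin d) => ft z.2) πhi :=
          intpi πhi hphi hSShi _ Bf (hftcont.comp continuous_snd) (fun z hz => hBf z.2 hz.2)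
        have hmixint : ∀ (φ : EuclideanSpace ℝ (Fin d) × EuclideanSpace ℝ (Fin d) → ℝ),
            Integrable φ πlo → Integrable φ πhi →
            (∫ z, φ z ∂πmix) = θ * (∫ z, φ z ∂πlo) + (1-θ) * (∫ z, φ z ∂πhi) := by
          intro φ i1 i2
          rw [hπmixdef, integral_add_measure (i1.smul_measure ENNReal.ofReal_ne_top)
            (i2.smul_measure ENNReal.ofReal_ne_top), integral_smul_measure,
            integral_smul_measure, ENNReal.toReal_ofReal hθ0,
            ENNReal.toReal_ofReal (by linarith : (0:ℝ) ≤ 1 - θ)]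
          simp [smul_eq_mul]
        have hmixcost : (∫ z, ct z ∂πmix) = ρ := by
          rw [hmixint ct intlo_ct inthi_ct, hcostlo', hcosthi']
          linear_combination -hθba
        have hmixobj : (∫ z, ft z.2 ∂πmix) = v lam := by
          rw [hmixint _ intlo_ft inthi_ft, hobjlo', hobjhi']
          simp only [hvdef]
          linear_combination -lam * hθba
        exact ⟨πmix, hmixprob, hmixSS, hmixfst, le_of_eq hmixcost, hmixobj⟩
      · have hab' : a = b := le_antisymm (key_a.trans hb_ge) (not_lt.mp hab)
        have hρa : ρ = a := le_antisymm (by linarith) key_a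
        refine ⟨P.map (fun x => (x, Tlo x)), hplo, hSSlo, hfstlo, ?_, ?_⟩
        · rw [hcostlo']; exact key_a
        · rw [hobjlo']
          simp only [hvdef]
          rw [hρa]
          ring

  -- ## translation between original and extended data
  have conv_obj : ∀ π : Measure (EuclideanSpace ℝ (Fin d) × EuclideanSpace ℝ (Fin d)),
      IsProbabilityMeasure π → π (S ×ˢ S) = 1 →
      (∫ z, f z.2 ∂π) = ∫ z, ft z.2 ∂π := by
    intro π hprob h1
    refine integral_congr_ae ?_
    filter_upwards [aeSS π hprob h1] with z hz
    exact (hft z.2 hz.2).symm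
  have conv_cost : ∀ π : Measure (EuclideanSpace ℝ (Fin d) × EuclideanSpace ℝ (Fin d)),
      IsProbabilityMeasure π → π (S ×ˢ S) = 1 →
      (∫ z, c z ∂π) = ∫ z, ct z ∂π := by
    intro π hprob h1
    refine integral_congr_ae ?_
    filter_upwards [aeSS π hprob h1] with z hz
    exact (hct z hz).symm
  have conv_g : ∀ l : ℝ,
      (∫ x, sSup ((fun y => f y - l * c (x, y)) '' S) ∂P) = vI l := by
    intro l
    refine integral_congr_ae ?_
    filter_upwards [hPS] with x hx
    have himg : (fun y => f y - l * c (x, y)) '' S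
        = (fun y => ft y - l * ct (x, y)) '' S := by
      apply Set.image_congr
      intro y hy
      rw [hft y hy, hct (x, y) ⟨hx, hy⟩]
    rw [himg]
  -- ## conclusion
  have hgreat : IsGreatest {r : ℝ |
      ∃ π : Measure (EuclideanSpace ℝ (Fin d) × EuclideanSpace ℝ (Fin d)),
        IsProbabilityMeasure π ∧ π (S ×ˢ S) = 1 ∧ π.fst = P ∧ (∫ z, c z ∂π) ≤ ρ ∧
        r = ∫ z, f z.2 ∂π} (v lam) := by
    constructor
    · exact ⟨piopt, hπprob, hπSS, hπfst,
        (by rw [conv_cost piopt hπprob hπSS]; exact hπcost),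
        (by rw [conv_obj piopt hπprob hπSS, hπobj])⟩
    · rintro r ⟨π, hprob, h1, hfst, hcost, rfl⟩
      rw [conv_obj π hprob h1]
      apply weak lam hlam0 π hprob h1 hfst
      rw [← conv_cost π hprob h1]
      exact hcost
  have hleast : IsLeast {r : ℝ | ∃ l : ℝ, 0 ≤ l ∧
      r = l * ρ + ∫ x, sSup ((fun y => f y - l * c (x, y)) '' S) ∂P} (v lam) := by
    constructor
    · exact ⟨lam, hlam0, by rw [conv_g lam]⟩
    · rintro r ⟨l, hl, rfl⟩
      rw [conv_g l]
      exact hlammin l hl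
  refine ⟨?_, ?_, ?_⟩
  · rw [hgreat.csSup_eq, hleast.csInf_eq]
  · exact ⟨piopt, hπprob, hπSS, hπfst,
      (by rw [conv_cost piopt hπprob hπSS]; exact hπcost),
      (by rw [hgreat.csSup_eq, conv_obj piopt hπprob hπSS, hπobj])⟩
  · exact ⟨lam, hlam0, by rw [hleast.csInf_eq, conv_g lam]⟩
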